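/- Let G be a finite group and S = {s₁,…,s_k} ⊆ G ∖ {e} a generating set of G such that the subgroups ⟨s₁,…,s_i⟩, 1 ≤ i ≤ k, are pairwise distinct (i.e., the Cayley digraph Cay(G,S) is hierarchical and connected). Then κ(Cay(G,S)) = |S|. -/

import Mathlib

open Classical

/-- A digraph (given by its edge relation `E`) is strongly connected iff for every
ordered pair of vertices there is a directed path from the first to the second. -/
def SC {V : Type*} (E : V → V → Prop) : Prop :=
  ∀ a b : V, Relation.ReflTransGen E a b

/-- The subdigraph induced on `A` is strongly connected. -/
def SCOn {V : Type*} (E : V → V → Prop) (A : Set V) : Prop :=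
  ∀ a ∈ A, ∀ b ∈ A, Relation.ReflTransGen (fun x y => x ∈ A ∧ y ∈ A ∧ E x y) a b

/-- Out-neighborhood of a set of vertices. -/
def Nout {V : Type*} (E : V → V → Prop) (A : Set V) : Set V :=
  {x | x ∉ A ∧ ∃ y ∈ A, E y x}

/-- Vertex connectivity: the least cardinality of a set `T` of vertices whose removal
leaves a non-strongly-connected digraph; `Nat.card V - 1` if no such `T` exists. -/
noncomputable def kappa {V : Type*} [Finite V] (E : V → V → Prop) : ℕ :=
  if ∃ T : Set V, ¬ SCOn E Tᶜ then
    sInf {m | ∃ T : Set V, T.ncard = m ∧ ¬ SCOn E Tᶜ}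
  else Nat.card V - 1

/-- A part of a digraph. -/
def IsPart {V : Type*} (E : V → V → Prop) (A : Set V) : Prop :=
  A.Nonempty ∧ ((A ∪ Nout E A)ᶜ : Set V).Nonempty

/-- An atom: a part with `|N(A)| = κ` of minimum cardinality among such parts. -/
def IsAtomD {V : Type*} [Finite V] (E : V → V → Prop) (A : Set V) : Prop :=
  IsPart E A ∧ (Nout E A).ncard = kappa E ∧
    ∀ B : Set V, IsPart E B → (Nout E B).ncard = kappa E → A.ncard ≤ B.ncard

/-- Edge relation of the Cayley digraph `Cay(G,S)`: an edge from `g₁` to `g₂` iff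
`g₁⁻¹g₂ ∈ S`. -/
def cayRel {G : Type*} [Group G] (S : Set G) : G → G → Prop :=
  fun x y => x⁻¹ * y ∈ S

namespace Aux
set_option linter.unusedSectionVars false

variable {V : Type*} [Finite V]

/-- complement part -/
def barP (E : V → V → Prop) (A : Set V) : Set V := (A ∪ Nout E A)ᶜ

lemma isPart_iff (E : V → V → Prop) (A : Set V) :
    IsPart E A ↔ A.Nonempty ∧ (barP E A).Nonempty := Iff.rfl

lemma not_mem_nout_self {E : V → V → Prop} {A : Set V} {x : V} (hx : x ∈ A) :
    x ∉ Nout E A := fun h => h.1 hx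

lemma mem_of_not_bar {E : V → V → Prop} {A : Set V} {x : V}
    (h1 : x ∉ barP E A) (h2 : x ∉ Nout E A) : x ∈ A := by
  by_contra hA
  exact h1 (fun hm => hm.elim hA h2)

lemma not_SCOn_compl_nout {E : V → V → Prop} {A : Set V} (hA : IsPart E A) :
    ¬ SCOn E (Nout E A)ᶜ := by
  obtain ⟨⟨a, ha⟩, ⟨c, hc⟩⟩ := hA
  intro hsc
  have hac : a ∈ (Nout E A)ᶜ := not_mem_nout_self ha
  have hcc : c ∈ (Nout E A)ᶜ := fun h => hc (Set.mem_union_right _ h)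
  have hreach := hsc a hac c hcc
  have key : ∀ z, Relation.ReflTransGen
      (fun x y => x ∈ (Nout E A)ᶜ ∧ y ∈ (Nout E A)ᶜ ∧ E x y) a z → z ∈ A := by
    intro z hz
    induction hz with
    | refl => exact ha
    | tail _ e ih =>
      rename_i b' c' _
      by_contra hcA
      exact e.2.1 ⟨hcA, b', ih, e.2.2⟩
  exact hc (Set.mem_union_left _ (key c hreach))

lemma exists_part_of_not_SCOn {E : V → V → Prop} {T : Set V} (h : ¬ SCOn E Tᶜ) :
    ∃ B : Set V, IsPart E B ∧ Nout E B ⊆ T := by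
  simp only [SCOn, not_forall] at h
  obtain ⟨a, ha, b, hb, hnr⟩ := h
  set rel := fun x y => x ∈ Tᶜ ∧ y ∈ Tᶜ ∧ E x y with hrel
  set B : Set V := {x | x ∈ Tᶜ ∧ Relation.ReflTransGen rel a x} with hB
  have haB : a ∈ B := ⟨ha, Relation.ReflTransGen.refl⟩
  have hbB : b ∉ B := fun hmem => hnr hmem.2
  have hNT : Nout E B ⊆ T := by
    intro y hy
    obtain ⟨hyB, x, hxB, hxy⟩ := hy
    by_contra hyT
    exact hyB ⟨hyT, hxB.2.tail ⟨hxB.1, hyT, hxy⟩⟩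
  refine ⟨B, ⟨⟨a, haB⟩, ⟨b, ?_⟩⟩, hNT⟩
  intro hmem
  rcases hmem with h1 | h2
  · exact hbB h1
  · exact hb (hNT h2)

lemma kappa_le_ncard_nout {E : V → V → Prop} {A : Set V} (hA : IsPart E A) :
    kappa E ≤ (Nout E A).ncard := by
  have hcut : ∃ T : Set V, ¬ SCOn E Tᶜ := ⟨Nout E A, not_SCOn_compl_nout hA⟩
  rw [kappa, if_pos hcut]
  exact Nat.sInf_le ⟨Nout E A, rfl, not_SCOn_compl_nout hA⟩

lemma exists_min_fragment {E : V → V → Prop} (h : ∃ T : Set V, ¬ SCOn E Tᶜ) :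
    ∃ B : Set V, IsPart E B ∧ (Nout E B).ncard = kappa E := by
  obtain ⟨T, hT⟩ := h
  have hne : {m | ∃ T : Set V, T.ncard = m ∧ ¬ SCOn E Tᶜ}.Nonempty := ⟨T.ncard, T, rfl, hT⟩
  have hmem := Nat.sInf_mem hne
  obtain ⟨T₀, hT₀c, hT₀⟩ := hmem
  obtain ⟨B, hB, hBT⟩ := exists_part_of_not_SCOn hT₀
  refine ⟨B, hB, le_antisymm ?_ ?_⟩
  · calc (Nout E B).ncard ≤ T₀.ncard := Set.ncard_le_ncard hBT (Set.toFinite _)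
    _ = sInf {m | ∃ T : Set V, T.ncard = m ∧ ¬ SCOn E Tᶜ} := hT₀c
    _ = kappa E := by rw [kappa, if_pos ⟨T, hT⟩]
  · exact kappa_le_ncard_nout hB

lemma scon_swap {E : V → V → Prop} {A : Set V} :
    SCOn (Function.swap E) A ↔ SCOn E A := by
  constructor <;> intro h a ha b hb
  · have := h b hb a ha
    have h2 := Relation.ReflTransGen.swap (r := fun x y => x ∈ A ∧ y ∈ A ∧ Function.swap E x y) a b this
    exact Relation.ReflTransGen.mono (by intro x y hxy; exact ⟨hxy.2.1, hxy.1, hxy.2.2⟩) a b h2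
  · have := h b hb a ha
    have h2 := Relation.ReflTransGen.swap (r := fun x y => x ∈ A ∧ y ∈ A ∧ E x y) a b this
    exact Relation.ReflTransGen.mono (by intro x y hxy; exact ⟨hxy.2.1, hxy.1, hxy.2.2⟩) a b h2

lemma kappa_swap (E : V → V → Prop) : kappa (Function.swap E) = kappa E := by
  have hset : ∀ T : Set V, (¬ SCOn (Function.swap E) Tᶜ) ↔ ¬ SCOn E Tᶜ := by
    intro T; rw [scon_swap]
  unfold kappa
  have h1 : (∃ T : Set V, ¬ SCOn (Function.swap E) Tᶜ) ↔ (∃ T : Set V, ¬ SCOn E Tᶜ) :=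
    exists_congr hset
  have h2 : {m | ∃ T : Set V, T.ncard = m ∧ ¬ SCOn (Function.swap E) Tᶜ}
      = {m | ∃ T : Set V, T.ncard = m ∧ ¬ SCOn E Tᶜ} := by
    ext m
    exact exists_congr (fun T => and_congr_right (fun _ => hset T))
  rw [h2]
  by_cases hc : ∃ T : Set V, ¬ SCOn E Tᶜ
  · rw [if_pos hc, if_pos (h1.mpr hc)]
  · rw [if_neg hc, if_neg (fun h => hc (h1.mp h))]

def FragP (E : V → V → Prop) (B : Set V) : Prop :=
  IsPart E B ∧ (Nout E B).ncard = kappa E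

lemma bar_disj_left {E : V → V → Prop} {A : Set V} {x : V} (h : x ∈ barP E A) : x ∉ A :=
  fun hx => h (Set.mem_union_left _ hx)

lemma bar_disj_nout {E : V → V → Prop} {A : Set V} {x : V} (h : x ∈ barP E A) :
    x ∉ Nout E A := fun hx => h (Set.mem_union_right _ hx)

lemma ncard_partition3 {B N C X : Set V} (hcov : ∀ x, x ∈ B ∨ x ∈ N ∨ x ∈ C)
    (hBN : ∀ x, x ∈ B → x ∈ N → False) (hBC : ∀ x, x ∈ B → x ∈ C → False)
    (hNC : ∀ x, x ∈ N → x ∈ C → False) :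
    X.ncard = (X ∩ B).ncard + (X ∩ N).ncard + (X ∩ C).ncard := by
  have h1 : X = (X ∩ B) ∪ ((X ∩ N) ∪ (X ∩ C)) := by
    ext x
    constructor
    · intro hx
      rcases hcov x with h | h | h
      · exact Or.inl ⟨hx, h⟩
      · exact Or.inr (Or.inl ⟨hx, h⟩)
      · exact Or.inr (Or.inr ⟨hx, h⟩)
    · rintro (h | h | h) <;> exact h.1
  have d1 : Disjoint (X ∩ N) (X ∩ C) :=
    Set.disjoint_left.mpr (fun x hx hx' => hNC x hx.2 hx'.2)
  have d2 : Disjoint (X ∩ B) ((X ∩ N) ∪ (X ∩ C)) := by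
    refine Set.disjoint_left.mpr (fun x hx hx' => ?_)
    rcases hx' with h | h
    · exact hBN x hx.2 h.2
    · exact hBC x hx.2 h.2
  calc X.ncard = ((X ∩ B) ∪ ((X ∩ N) ∪ (X ∩ C))).ncard := by rw [← h1]
    _ = (X ∩ B).ncard + ((X ∩ N) ∪ (X ∩ C)).ncard :=
        Set.ncard_union_eq d2 (Set.toFinite _) (Set.toFinite _)
    _ = (X ∩ B).ncard + ((X ∩ N).ncard + (X ∩ C).ncard) := by
        rw [Set.ncard_union_eq d1 (Set.toFinite _) (Set.toFinite _)]
    _ = _ := by ring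

lemma ncard_partition3' {E : V → V → Prop} (A : Set V) (X : Set V) :
    X.ncard = (X ∩ A).ncard + (X ∩ Nout E A).ncard + (X ∩ barP E A).ncard := by
  refine ncard_partition3 ?_ ?_ ?_ ?_
  · intro x
    by_cases h1 : x ∈ A
    · exact Or.inl h1
    by_cases h2 : x ∈ Nout E A
    · exact Or.inr (Or.inl h2)
    · exact Or.inr (Or.inr (fun hm => hm.elim h1 h2))
  · exact fun x hx hx' => hx'.1 hx
  · exact fun x hx hx' => bar_disj_left hx' hx
  · exact fun x hx hx' => bar_disj_nout hx' hx

lemma mem_union_of_not_bar {E : V → V → Prop} {A : Set V} {x : V} (h : x ∉ barP E A) :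
    x ∈ A ∨ x ∈ Nout E A := by
  by_contra hcon
  push_neg at hcon
  exact h (fun hm => hm.elim hcon.1 hcon.2)

lemma nout_swap_bar_subset {E : V → V → Prop} {B : Set V} :
    Nout (Function.swap E) (barP E B) ⊆ Nout E B := by
  rintro x ⟨hxbar, y, hybar, hxy⟩
  -- hxy : Function.swap E y x, i.e., E x y : edge from x into y ∈ bar
  have hExy : E x y := hxy
  have hxB : x ∉ B := by
    intro hxB
    have hyN : y ∈ Nout E B := ⟨bar_disj_left hybar, x, hxB, hExy⟩
    exact bar_disj_nout hybar hyN
  rcases mem_union_of_not_bar hxbar with h | h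
  · exact absurd h hxB
  · exact h

lemma bar_swap_bar_supset {E : V → V → Prop} {B : Set V} :
    B ⊆ barP (Function.swap E) (barP E B) := by
  intro x hxB
  intro hmem
  rcases hmem with h | h
  · exact bar_disj_left h hxB
  · exact (nout_swap_bar_subset h).1 hxB

lemma frag_bar {E : V → V → Prop} {B : Set V} (hb : FragP E B) :
    FragP (Function.swap E) (barP E B) := by
  obtain ⟨⟨hBne, hbarne⟩, hcard⟩ := hb
  have hpart : IsPart (Function.swap E) (barP E B) := by
    refine ⟨hbarne, ?_⟩
    obtain ⟨b, hbB⟩ := hBne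
    exact ⟨b, bar_swap_bar_supset hbB⟩
  refine ⟨hpart, le_antisymm ?_ ?_⟩
  · calc (Nout (Function.swap E) (barP E B)).ncard ≤ (Nout E B).ncard :=
        Set.ncard_le_ncard nout_swap_bar_subset (Set.toFinite _)
      _ = kappa E := hcard
      _ = kappa (Function.swap E) := (kappa_swap E).symm
  · exact kappa_le_ncard_nout hpart

lemma nout_inter_subset (E : V → V → Prop) (A F : Set V) :
    Nout E (A ∩ F) ⊆ (Nout E A ∩ F) ∪ (Nout E F ∩ A) ∪ (Nout E A ∩ Nout E F) := by
  rintro v ⟨hv, u, ⟨huA, huF⟩, huv⟩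
  by_cases hvA : v ∈ A
  · by_cases hvF : v ∈ F
    · exact absurd ⟨hvA, hvF⟩ hv
    · exact Or.inl (Or.inr ⟨⟨hvF, u, huF, huv⟩, hvA⟩)
  · by_cases hvF : v ∈ F
    · exact Or.inl (Or.inl ⟨⟨hvA, u, huA, huv⟩, hvF⟩)
    · exact Or.inr ⟨⟨hvA, u, huA, huv⟩, ⟨hvF, u, huF, huv⟩⟩

lemma nout_union_subset (E : V → V → Prop) (A F : Set V) :
    Nout E (A ∪ F) ⊆ (Nout E A \ (F ∪ Nout E F)) ∪ (Nout E F \ A) := by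
  rintro v ⟨hv, u, huAF, huv⟩
  have hvA : v ∉ A := fun h => hv (Or.inl h)
  have hvF : v ∉ F := fun h => hv (Or.inr h)
  by_cases hvY : v ∈ Nout E F
  · exact Or.inr ⟨hvY, hvA⟩
  · rcases huAF with huA | huF
    · exact Or.inl ⟨⟨hvA, u, huA, huv⟩, fun h => h.elim hvF hvY⟩
    · exact absurd ⟨hvF, u, huF, huv⟩ hvY

lemma nout_submodular (E : V → V → Prop) (A F : Set V) :
    (Nout E (A ∩ F)).ncard + (Nout E (A ∪ F)).ncard ≤
      (Nout E A).ncard + (Nout E F).ncard := by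
  set X := Nout E A with hX
  set Y := Nout E F with hY
  have c1 : (Nout E (A ∩ F)).ncard ≤ (X ∩ F).ncard + (Y ∩ A).ncard + (X ∩ Y).ncard := by
    calc (Nout E (A ∩ F)).ncard ≤ ((X ∩ F) ∪ (Y ∩ A) ∪ (X ∩ Y)).ncard :=
        Set.ncard_le_ncard (nout_inter_subset E A F) (Set.toFinite _)
      _ ≤ ((X ∩ F) ∪ (Y ∩ A)).ncard + (X ∩ Y).ncard := Set.ncard_union_le _ _
      _ ≤ (X ∩ F).ncard + (Y ∩ A).ncard + (X ∩ Y).ncard := by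
          have := Set.ncard_union_le (X ∩ F) (Y ∩ A)
          omega
  have c2 : (Nout E (A ∪ F)).ncard ≤ (X \ (F ∪ Y)).ncard + (Y \ A).ncard := by
    calc (Nout E (A ∪ F)).ncard ≤ ((X \ (F ∪ Y)) ∪ (Y \ A)).ncard :=
        Set.ncard_le_ncard (nout_union_subset E A F) (Set.toFinite _)
      _ ≤ _ := Set.ncard_union_le _ _
  have dX : (X ∩ F).ncard + (X ∩ Y).ncard + (X \ (F ∪ Y)).ncard ≤ X.ncard := by
    have h1 : (X ∩ F) ∪ (X ∩ Y) ∪ (X \ (F ∪ Y)) ⊆ X := by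
      rintro x ((h | h) | h) <;> [exact h.1; exact h.1; exact h.1]
    have d1 : Disjoint (X ∩ F) (X ∩ Y) := by
      refine Set.disjoint_left.mpr (fun x hx hx' => ?_)
      exact hx'.2.1 hx.2
    have d2 : Disjoint ((X ∩ F) ∪ (X ∩ Y)) (X \ (F ∪ Y)) := by
      refine Set.disjoint_left.mpr (fun x hx hx' => ?_)
      rcases hx with h | h
      · exact hx'.2 (Or.inl h.2)
      · exact hx'.2 (Or.inr h.2)
    calc (X ∩ F).ncard + (X ∩ Y).ncard + (X \ (F ∪ Y)).ncard
        = ((X ∩ F) ∪ (X ∩ Y)).ncard + (X \ (F ∪ Y)).ncard := by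
          rw [Set.ncard_union_eq d1 (Set.toFinite _) (Set.toFinite _)]
      _ = (((X ∩ F) ∪ (X ∩ Y)) ∪ (X \ (F ∪ Y))).ncard :=
          (Set.ncard_union_eq d2 (Set.toFinite _) (Set.toFinite _)).symm
      _ ≤ X.ncard := Set.ncard_le_ncard h1 (Set.toFinite _)
  have dY : (Y ∩ A).ncard + (Y \ A).ncard = Y.ncard :=
    Set.ncard_inter_add_ncard_diff_eq_ncard Y A (Set.toFinite _)
  omega

lemma part_inter {E : V → V → Prop} {A F : Set V} (hA : FragP E A) (hF : FragP E F)
    (hne : (A ∩ F).Nonempty) : IsPart E (A ∩ F) := by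
  refine ⟨hne, ?_⟩
  obtain ⟨c, hc⟩ := hA.1.2
  refine ⟨c, fun hmem => hc ?_⟩
  rcases hmem with h | h
  · exact Or.inl h.1
  · rcases nout_inter_subset E A F h with (h' | h') | h'
    · exact Or.inr h'.1
    · exact Or.inl h'.2
    · exact Or.inr h'.1

lemma part_union {E : V → V → Prop} {A F : Set V} (hA : FragP E A) (hF : FragP E F)
    (hbb : (barP E A ∩ barP E F).Nonempty) : IsPart E (A ∪ F) := by
  obtain ⟨a, ha⟩ := hA.1.1
  obtain ⟨c, hc1, hc2⟩ := hbb
  refine ⟨⟨a, Or.inl ha⟩, ⟨c, fun hmem => ?_⟩⟩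
  rcases hmem with (h | h) | h
  · exact bar_disj_left hc1 h
  · exact bar_disj_left hc2 h
  · rcases nout_union_subset E A F h with h' | h'
    · exact bar_disj_nout hc1 h'.1
    · exact bar_disj_nout hc2 h'.1

lemma ncard_nout_inter_le {E : V → V → Prop} (A F : Set V) :
    (Nout E (A ∩ F)).ncard ≤ (Nout E A ∩ F).ncard + (Nout E F ∩ A).ncard
      + (Nout E A ∩ Nout E F).ncard := by
  calc (Nout E (A ∩ F)).ncard
      ≤ ((Nout E A ∩ F) ∪ (Nout E F ∩ A) ∪ (Nout E A ∩ Nout E F)).ncard :=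
        Set.ncard_le_ncard (nout_inter_subset E A F) (Set.toFinite _)
    _ ≤ ((Nout E A ∩ F) ∪ (Nout E F ∩ A)).ncard + (Nout E A ∩ Nout E F).ncard :=
        Set.ncard_union_le _ _
    _ ≤ _ := by
        have := Set.ncard_union_le (Nout E A ∩ F) (Nout E F ∩ A)
        omega

lemma atom_lemma {E : V → V → Prop} {A F : Set V} (hA : FragP E A)
    (hmin : ∀ B : Set V, (FragP E B ∨ FragP (Function.swap E) B) → A.ncard ≤ B.ncard)
    (hF : FragP E F) : A ⊆ F ∨ A ∩ F = ∅ := by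
  by_cases hcap : A ∩ F = ∅
  · exact Or.inr hcap
  have hne : (A ∩ F).Nonempty := Set.nonempty_iff_ne_empty.mpr hcap
  have hIpart : IsPart E (A ∩ F) := part_inter hA hF hne
  have hkI : kappa E ≤ (Nout E (A ∩ F)).ncard := kappa_le_ncard_nout hIpart
  by_cases hbb : (barP E A ∩ barP E F).Nonempty
  · -- case (a)
    have hUpart : IsPart E (A ∪ F) := part_union hA hF hbb
    have hkU : kappa E ≤ (Nout E (A ∪ F)).ncard := kappa_le_ncard_nout hUpart
    have hsub := nout_submodular E A F
    have hIeq : (Nout E (A ∩ F)).ncard = kappa E := by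
      rw [hA.2, hF.2] at hsub; omega
    have hfragI : FragP E (A ∩ F) := ⟨hIpart, hIeq⟩
    have hle : A.ncard ≤ (A ∩ F).ncard := hmin _ (Or.inl hfragI)
    have heq : A ∩ F = A := Set.eq_of_subset_of_ncard_le Set.inter_subset_left hle (Set.toFinite _)
    exact Or.inl (Set.inter_eq_left.mp heq)
  · -- case (b): contradiction
    exfalso
    have hbbe : barP E A ∩ barP E F = ∅ := Set.not_nonempty_iff_eq_empty.mp hbb
    set X := Nout E A with hXdef
    set Y := Nout E F with hYdef
    set Fb := barP E F with hFbdef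
    have hFb : FragP (Function.swap E) Fb := frag_bar hF
    have hALE : A.ncard ≤ Fb.ncard := hmin _ (Or.inr hFb)
    have hXpart : X.ncard = (X ∩ F).ncard + (X ∩ Y).ncard + (X ∩ Fb).ncard :=
      ncard_partition3' F X
    have hApart : A.ncard = (A ∩ F).ncard + (A ∩ Y).ncard + (A ∩ Fb).ncard :=
      ncard_partition3' F A
    have hFbpart : Fb.ncard = (Fb ∩ A).ncard + (Fb ∩ X).ncard + (Fb ∩ barP E A).ncard :=
      ncard_partition3' A Fb
    have hFbbar : Fb ∩ barP E A = ∅ := by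
      rw [Set.inter_comm]
      exact hbbe
    have hkX : X.ncard = kappa E := hA.2
    have hc1 : (Nout E (A ∩ F)).ncard ≤ (X ∩ F).ncard + (Y ∩ A).ncard + (X ∩ Y).ncard :=
      ncard_nout_inter_le A F
    have hvi : (X ∩ Fb).ncard ≤ (Y ∩ A).ncard := by
      have h0 : (Fb ∩ barP E A).ncard = 0 := by rw [hFbbar]; exact Set.ncard_empty _
      omega
    have hYA : (Y ∩ A).ncard = (A ∩ Y).ncard := by rw [Set.inter_comm]
    have hFbA : (Fb ∩ A).ncard = (A ∩ Fb).ncard := by rw [Set.inter_comm]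
    have hFbX : (Fb ∩ X).ncard = (X ∩ Fb).ncard := by rw [Set.inter_comm]
    have hAFpos : 0 < (A ∩ F).ncard := (Set.ncard_pos (Set.toFinite _)).mpr hne
    have h0 : (Fb ∩ barP E A).ncard = 0 := by rw [hFbbar]; exact Set.ncard_empty _
    omega

lemma exists_atomic (E : V → V → Prop) (h : ∃ T : Set V, ¬ SCOn E Tᶜ) :
    ∃ A : Set V, (FragP E A ∨ FragP (Function.swap E) A) ∧
      ∀ B : Set V, (FragP E B ∨ FragP (Function.swap E) B) → A.ncard ≤ B.ncard := by
  obtain ⟨B₀, hB₀, hB₀c⟩ := exists_min_fragment h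
  set N : Set ℕ := {n | ∃ B : Set V, (FragP E B ∨ FragP (Function.swap E) B) ∧ B.ncard = n}
    with hN
  have hNne : N.Nonempty := ⟨B₀.ncard, B₀, Or.inl ⟨hB₀, hB₀c⟩, rfl⟩
  obtain ⟨A, hAfrag, hAc⟩ := Nat.sInf_mem hNne
  refine ⟨A, hAfrag, fun B hB => ?_⟩
  rw [hAc]
  exact Nat.sInf_le ⟨B, hB, rfl⟩

section Grp
variable {G : Type*} [Group G] [Finite G] [DecidableEq G]

/-- partial closures -/
def Bgp (s : ℕ → G) (i : ℕ) : Subgroup G :=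
  Subgroup.closure (((Finset.Icc 1 i).image s : Finset G) : Set G)

/-- right-translates of A by generators -/
def ASet (s : ℕ → G) (k : ℕ) (A : Set G) : Set G :=
  {x | ∃ i ∈ Finset.Icc 1 k, ∃ a ∈ A, x = a * s i}

lemma Bgp_mono (s : ℕ → G) {i j : ℕ} (h : i ≤ j) : Bgp s i ≤ Bgp s j := by
  apply Subgroup.closure_mono
  intro x hx
  simp only [Finset.coe_image, Set.mem_image, Finset.mem_coe, Finset.mem_Icc] at hx ⊢
  obtain ⟨t, ht, rfl⟩ := hx
  exact ⟨t, ⟨ht.1, le_trans ht.2 h⟩, rfl⟩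

lemma mem_Bgp (s : ℕ → G) {i j : ℕ} (h1 : 1 ≤ i) (h2 : i ≤ j) : s i ∈ Bgp s j := by
  apply Subgroup.subset_closure
  simp only [Finset.coe_image, Set.mem_image, Finset.mem_coe, Finset.mem_Icc]
  exact ⟨i, ⟨h1, h2⟩, rfl⟩

lemma card_double {H K : Subgroup G} (h : H < K) : 2 * Nat.card H ≤ Nat.card K := by
  have hdvd : Nat.card H ∣ Nat.card K := Subgroup.card_dvd_of_le h.le
  have hle : Nat.card H ≤ Nat.card K := Subgroup.card_le_of_le h.le
  have hne : Nat.card H ≠ Nat.card K := by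
    intro heq
    have hsub : (H : Set G) ⊆ (K : Set G) := h.le
    have hcard : (K : Set G).ncard ≤ (H : Set G).ncard := by
      rw [← Nat.card_coe_set_eq, ← Nat.card_coe_set_eq]
      rw [show Nat.card (H : Set G) = Nat.card H from rfl,
        show Nat.card (K : Set G) = Nat.card K from rfl, heq]
    have := Set.eq_of_subset_of_ncard_le hsub hcard (Set.toFinite _)
    exact h.ne (SetLike.coe_injective this)
  obtain ⟨c, hc⟩ := hdvd
  have hpos : 0 < Nat.card H := Nat.card_pos
  have hc2 : 2 ≤ c := by
    rcases c with _ | _ | c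
    · omega
    · omega
    · omega
  calc 2 * Nat.card H ≤ c * Nat.card H := Nat.mul_le_mul_right _ hc2
    _ = Nat.card H * c := Nat.mul_comm _ _
    _ = Nat.card K := hc.symm

lemma chain_pow {k : ℕ} {s : ℕ → G}
    (hchain : ∀ i ∈ Finset.Icc 1 k, s i ∉ Bgp s (i - 1))
    (C : Subgroup G) (T : Finset ℕ) (hT : T ⊆ Finset.Icc 1 k)
    (hmem : ∀ t ∈ T, s t ∈ C) : 2 ^ T.card ≤ Nat.card C := by
  obtain ⟨n, hn⟩ : ∃ n, T.card = n := ⟨_, rfl⟩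
  rw [hn]
  induction n generalizing T C with
  | zero => simpa using Nat.one_le_iff_ne_zero.mpr (Nat.card_pos (α := C)).ne'
  | succ n ih =>
    have hTne : T.Nonempty := Finset.card_pos.mp (by omega)
    set t0 := T.max' hTne with ht0
    have ht0T : t0 ∈ T := T.max'_mem hTne
    have ht0I : t0 ∈ Finset.Icc 1 k := hT ht0T
    set D := C ⊓ Bgp s (t0 - 1) with hD
    have hmemD : ∀ t ∈ T.erase t0, s t ∈ D := by
      intro t ht
      have htT : t ∈ T := Finset.mem_of_mem_erase ht
      have htlt : t < t0 :=
        lt_of_le_of_ne (Finset.le_max' T t htT) (Finset.ne_of_mem_erase ht)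
      have ht1 : 1 ≤ t := (Finset.mem_Icc.mp (hT htT)).1
      refine ⟨hmem t htT, ?_⟩
      exact Bgp_mono s (by omega : t ≤ t0 - 1) (mem_Bgp s ht1 le_rfl)
    have hcarde : (T.erase t0).card = n := by
      rw [Finset.card_erase_of_mem ht0T]; omega
    have hih := ih D (T.erase t0) (fun x hx => hT (Finset.mem_of_mem_erase hx)) hmemD hcarde
    have hlt : D < C := by
      refine lt_of_le_of_ne inf_le_left (fun heq => ?_)
      have : s t0 ∈ D := heq ▸ hmem t0 ht0T
      exact hchain t0 ht0I this.2
    calc 2 ^ (n + 1) = 2 * 2 ^ n := by ring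
      _ ≤ 2 * Nat.card D := by omega
      _ ≤ Nat.card C := card_double hlt

lemma rel_chain {k : ℕ} {s : ℕ → G}
    (hchain : ∀ i ∈ Finset.Icc 1 k, s i ∉ Bgp s (i - 1))
    (C : Subgroup G) (a : ℕ) :
    ∀ b : ℕ, a ≤ b → b ≤ k → (∀ t : ℕ, a < t → t ≤ b → s t ∈ C) →
    2 ^ (b - a) * Nat.card (C ⊓ Bgp s a : Subgroup G) ≤
      Nat.card (C ⊓ Bgp s b : Subgroup G) := by
  intro b
  induction b with
  | zero =>
    intro hab _ _
    interval_cases a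
    simp
  | succ m ih =>
    intro hab hbk hmem
    rcases Nat.eq_or_lt_of_le hab with heq | hlt
    · subst heq
      simp
    · have ham : a ≤ m := by omega
      have hih := ih ham (by omega) (fun t h1 h2 => hmem t h1 (by omega))
      have hstep : (C ⊓ Bgp s m : Subgroup G) < C ⊓ Bgp s (m + 1) := by
        refine lt_of_le_of_ne (le_inf inf_le_left
          (le_trans inf_le_right (Bgp_mono s (by omega)))) (fun heq => ?_)
        have hsm : s (m + 1) ∈ C ⊓ Bgp s (m + 1) :=
          ⟨hmem (m + 1) (by omega) le_rfl, mem_Bgp s (by omega) le_rfl⟩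
        rw [← heq] at hsm
        have := hchain (m + 1) (Finset.mem_Icc.mpr ⟨by omega, hbk⟩)
        simp only [Nat.add_sub_cancel] at this
        exact this hsm.2
      have hdb := card_double hstep
      have hexp : m + 1 - a = (m - a) + 1 := by omega
      calc 2 ^ (m + 1 - a) * Nat.card (C ⊓ Bgp s a : Subgroup G)
          = 2 * (2 ^ (m - a) * Nat.card (C ⊓ Bgp s a : Subgroup G)) := by
            rw [hexp]; ring
        _ ≤ 2 * Nat.card (C ⊓ Bgp s m : Subgroup G) := by omega
        _ ≤ _ := hdb

lemma pq_bound (p q : ℕ) (hq : 1 ≤ q) : p + q ≤ (2 ^ q - 1) * 2 ^ p := by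
  have h1 : q + 1 ≤ 2 ^ q := Nat.lt_two_pow_self (n := q)
  have h2 : p + 1 ≤ 2 ^ p := Nat.lt_two_pow_self (n := p)
  have h3 : q ≤ 2 ^ q - 1 := by omega
  calc p + q ≤ q * (p + 1) := by nlinarith
    _ ≤ (2 ^ q - 1) * (p + 1) := Nat.mul_le_mul_right _ h3
    _ ≤ (2 ^ q - 1) * 2 ^ p := Nat.mul_le_mul_left _ h2

lemma s_inj {k : ℕ} {s : ℕ → G}
    (hchain : ∀ i ∈ Finset.Icc 1 k, s i ∉ Bgp s (i - 1))
    {i i' : ℕ} (hi : i ∈ Finset.Icc 1 k) (hi' : i' ∈ Finset.Icc 1 k) (hlt : i < i') :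
    s i ≠ s i' := by
  intro heq
  have h1 := Finset.mem_Icc.mp hi
  have hmem : s i ∈ Bgp s (i' - 1) := Bgp_mono s (by omega) (mem_Bgp s h1.1 le_rfl)
  rw [heq] at hmem
  exact hchain i' hi' hmem

lemma alg_key {s : ℕ → G} (k : ℕ)
    (hchain : ∀ i ∈ Finset.Icc 1 k, s i ∉ Bgp s (i - 1))
    (A : Subgroup G)
    (hgenA : ∀ x ∈ A, x ∈ Subgroup.closure {y : G | y ∈ A ∧ ∃ i ∈ Finset.Icc 1 k, y = s i})
    (hpart : ¬ ((Bgp s k : Set G) ⊆ (A : Set G) ∪ ASet s k (A : Set G))) :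
    k ≤ ((ASet s k (A : Set G)) \ (A : Set G)).ncard := by
  classical
  induction k with
  | zero =>
    exact Nat.zero_le _
  | succ n ih =>
    -- A ≤ Bgp s (n+1)
    have hAleB : A ≤ Bgp s (n + 1) := by
      intro x hx
      refine Subgroup.closure_le (Bgp s (n + 1)) |>.mpr ?_ (hgenA x hx)
      rintro y ⟨hyA, i, hiI, rfl⟩
      exact mem_Bgp s (Finset.mem_Icc.mp hiI).1 (Finset.mem_Icc.mp hiI).2
    by_cases hall : ∀ i ∈ Finset.Icc 1 (n + 1), s i ∈ A
    · exfalso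
      apply hpart
      intro x hx
      left
      have : Bgp s (n + 1) ≤ A := by
        apply (Subgroup.closure_le A).mpr
        intro y hy
        simp only [Finset.coe_image, Set.mem_image, Finset.mem_coe] at hy
        obtain ⟨i, hiI, rfl⟩ := hy
        exact hall i hiI
      exact this hx
    push_neg at hall
    by_cases hks : s (n + 1) ∈ A
    · -- direct case: s_{k} ∈ A
      set Jset := (Finset.Icc 1 (n + 1)).filter (fun i => s i ∉ A) with hJdef
      have hJne : Jset.Nonempty := by
        obtain ⟨i, hiI, hiA⟩ := hall
        exact ⟨i, Finset.mem_filter.mpr ⟨hiI, hiA⟩⟩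
      set j := Jset.max' hJne with hjdef
      have hjJ : j ∈ Jset := Jset.max'_mem hJne
      have hjI : j ∈ Finset.Icc 1 (n + 1) := (Finset.mem_filter.mp hjJ).1
      have hjA : s j ∉ A := (Finset.mem_filter.mp hjJ).2
      have hj1 : 1 ≤ j := (Finset.mem_Icc.mp hjI).1
      have hjk : j ≤ n + 1 := (Finset.mem_Icc.mp hjI).2
      have hjn : j ≤ n := by
        rcases Nat.eq_or_lt_of_le hjk with h | h
        · exact absurd (h.symm ▸ hks) hjA
        · omega
      have hlate : ∀ t, j < t → t ≤ n + 1 → s t ∈ A := by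
        intro t h1 h2
        by_contra hc
        have : t ∈ Jset := Finset.mem_filter.mpr ⟨Finset.mem_Icc.mpr ⟨by omega, h2⟩, hc⟩
        exact absurd (Finset.le_max' Jset t this) (by omega)
      set Pset := (Finset.Icc 1 (n + 1)).filter (fun i => s i ∈ A ∧ i < j) with hPdef
      set m := Jset.card with hmdef
      set p := Pset.card with hpdef
      set q := n + 1 - j with hqdef
      have hq1 : 1 ≤ q := by omega
      -- m + p = j
      have hunion : Jset ∪ Pset = Finset.Icc 1 j := by
        ext i
        simp only [hJdef, hPdef, Finset.mem_union, Finset.mem_filter, Finset.mem_Icc]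
        constructor
        · rintro (⟨⟨h1, h2⟩, h3⟩ | ⟨⟨h1, h2⟩, h3, h4⟩)
          · refine ⟨h1, ?_⟩
            by_contra hc
            exact h3 (hlate i (by omega) h2)
          · exact ⟨h1, by omega⟩
        · rintro ⟨h1, h2⟩
          by_cases hiA : s i ∈ A
          · right
            refine ⟨⟨h1, by omega⟩, hiA, ?_⟩
            rcases Nat.eq_or_lt_of_le h2 with h | h
            · exact absurd (h ▸ hiA) hjA
            · exact h
          · exact Or.inl ⟨⟨h1, by omega⟩, hiA⟩
      have hdisj : Disjoint Jset Pset := by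
        refine Finset.disjoint_left.mpr (fun i hi hi' => ?_)
        exact (Finset.mem_filter.mp hi).2 (Finset.mem_filter.mp hi').2.1
      have hmpj : m + p = j := by
        have := Finset.card_union_of_disjoint hdisj
        rw [hunion] at this
        simpa [Nat.card_Icc] using this.symm
      -- sets M and Asj
      set M : Set G := ↑(Jset.image s) with hMdef
      set Asj : Set G := (fun a => a * s j) '' (A : Set G) with hAsjdef
      have hMcard : M.ncard = m := by
        rw [hMdef, Set.ncard_coe_finset]
        apply Finset.card_image_of_injOn
        intro x hx y hy hxy
        by_contra hne
        rcases Nat.lt_or_ge x y with h | h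
        · exact s_inj hchain (Finset.mem_filter.mp hx).1 (Finset.mem_filter.mp hy).1 h hxy
        · exact s_inj hchain (Finset.mem_filter.mp hy).1 (Finset.mem_filter.mp hx).1
            (by omega) hxy.symm
      have hMsub : M ⊆ (ASet s (n + 1) (A : Set G)) \ (A : Set G) := by
        intro x hx
        simp only [hMdef, Finset.coe_image, Set.mem_image, Finset.mem_coe] at hx
        obtain ⟨i, hiJ, rfl⟩ := hx
        have hiI := (Finset.mem_filter.mp hiJ).1
        have hiA := (Finset.mem_filter.mp hiJ).2
        exact ⟨⟨i, hiI, 1, one_mem A, (one_mul _).symm⟩, hiA⟩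
      have hAsjsub : Asj ⊆ (ASet s (n + 1) (A : Set G)) \ (A : Set G) := by
        rintro x ⟨a, haA, rfl⟩
        refine ⟨⟨j, hjI, a, haA, rfl⟩, fun hmem => hjA ?_⟩
        have : (a : G)⁻¹ * (a * s j) ∈ A := A.mul_mem (A.inv_mem haA) hmem
        simpa [← mul_assoc] using this
      have hAsjcard : Asj.ncard = Nat.card A := by
        rw [hAsjdef, Set.ncard_image_of_injective _ (mul_left_injective (s j)),
          ← Nat.card_coe_set_eq]
        rfl
      -- injection of M ∩ Asj into A ⊓ Bgp s j
      set cAB := Nat.card (A ⊓ Bgp s j : Subgroup G) with hcABdef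
      have hinj : (M ∩ Asj).ncard ≤ cAB := by
        have himg : (fun x => x * (s j)⁻¹) '' (M ∩ Asj) ⊆ ((A ⊓ Bgp s j : Subgroup G) : Set G) := by
          rintro y ⟨x, ⟨hxM, hxAsj⟩, rfl⟩
          obtain ⟨a, haA, rfl⟩ := hxAsj
          simp only [hMdef, Finset.coe_image, Set.mem_image, Finset.mem_coe] at hxM
          obtain ⟨u, huJ, heq⟩ := hxM
          have huI := (Finset.mem_filter.mp huJ).1
          have hu1 := (Finset.mem_Icc.mp huI).1
          have huk := (Finset.mem_Icc.mp huI).2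
          have huj : u ≤ j := by
            by_contra hc
            exact (Finset.mem_filter.mp huJ).2 (hlate u (by omega) huk)
          constructor
          · simpa [mul_assoc] using haA
          · have h1 : s u ∈ Bgp s j := Bgp_mono s huj (mem_Bgp s hu1 le_rfl)
            have h2 : s j ∈ Bgp s j := mem_Bgp s hj1 le_rfl
            have h3 : s u * (s j)⁻¹ ∈ Bgp s j :=
              (Bgp s j).mul_mem h1 ((Bgp s j).inv_mem h2)
            rw [heq] at h3
            simpa using h3
        calc (M ∩ Asj).ncard
            = ((fun x => x * (s j)⁻¹) '' (M ∩ Asj)).ncard :=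
              (Set.ncard_image_of_injective _ (mul_left_injective _)).symm
          _ ≤ ((A ⊓ Bgp s j : Subgroup G) : Set G).ncard :=
              Set.ncard_le_ncard himg (Set.toFinite _)
          _ = cAB := by rw [← Nat.card_coe_set_eq]; rfl
      -- cardinality bounds
      have hrel : 2 ^ q * cAB ≤ Nat.card A := by
        have := rel_chain hchain A j (n + 1) (by omega) le_rfl
          (fun t ht1 ht2 => hlate t ht1 ht2)
        rw [show A ⊓ Bgp s (n + 1) = A from inf_eq_left.mpr hAleB] at this
        exact this
      have hpow : 2 ^ p ≤ cAB := by
        apply chain_pow hchain (A ⊓ Bgp s j) Pset (Finset.filter_subset _ _)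
        intro t htP
        have h1 := (Finset.mem_filter.mp htP).2
        have h2 := (Finset.mem_filter.mp htP).1
        exact ⟨h1.1, Bgp_mono s (by omega : t ≤ j) (mem_Bgp s (Finset.mem_Icc.mp h2).1 le_rfl)⟩
      have hnum : cAB + (p + q) ≤ Nat.card A := by
        have h1 : (2 ^ q - 1) * 2 ^ p ≤ (2 ^ q - 1) * cAB := Nat.mul_le_mul_left _ hpow
        have h2 : p + q ≤ (2 ^ q - 1) * 2 ^ p := pq_bound p q hq1
        obtain ⟨d, hd⟩ : ∃ d, 2 ^ q = d + 1 := ⟨2 ^ q - 1, by have := Nat.one_le_two_pow (n := q); omega⟩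
        have h3 : 2 ^ q * cAB = cAB + (2 ^ q - 1) * cAB := by
          rw [hd, Nat.add_sub_cancel]; ring
        omega
      -- union bound
      have hcup : (M ∪ Asj).ncard ≤ ((ASet s (n + 1) (A : Set G)) \ (A : Set G)).ncard :=
        Set.ncard_le_ncard (Set.union_subset hMsub hAsjsub) (Set.toFinite _)
      have hsplit : (M ∪ Asj).ncard = (M \ Asj).ncard + Asj.ncard := by
        rw [← Set.ncard_union_eq Set.disjoint_sdiff_left (Set.toFinite _) (Set.toFinite _),
          Set.diff_union_self]
      have hMsplit : (M ∩ Asj).ncard + (M \ Asj).ncard = m := by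
        rw [← hMcard]
        exact Set.ncard_inter_add_ncard_diff_eq_ncard M Asj (Set.toFinite _)
      have hfinal : m + p + q = n + 1 := by omega
      omega
    · -- case s_{n+1} ∉ A
      have hAleBn : A ≤ Bgp s n := by
        intro x hx
        refine Subgroup.closure_le (Bgp s n) |>.mpr ?_ (hgenA x hx)
        rintro y ⟨hyA, i, hiI, rfl⟩
        have h1 := Finset.mem_Icc.mp hiI
        have hin : i ≤ n := by
          rcases Nat.eq_or_lt_of_le h1.2 with h | h
          · exact absurd (h ▸ hyA) hks
          · omega
        exact mem_Bgp s h1.1 hin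
      set Asn : Set G := (fun a => a * s (n + 1)) '' (A : Set G) with hAsndef
      have hAsncard : Asn.ncard = Nat.card A := by
        rw [hAsndef, Set.ncard_image_of_injective _ (mul_left_injective (s (n + 1))),
          ← Nat.card_coe_set_eq]
        rfl
      have hAsnsub : Asn ⊆ (ASet s (n + 1) (A : Set G)) \ (A : Set G) := by
        rintro x ⟨a, haA, rfl⟩
        refine ⟨⟨n + 1, Finset.mem_Icc.mpr ⟨by omega, le_rfl⟩, a, haA, rfl⟩, fun hmem => hks ?_⟩
        have : (a : G)⁻¹ * (a * s (n + 1)) ∈ A := A.mul_mem (A.inv_mem haA) hmem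
        simpa [← mul_assoc] using this
      have hAsnB : ∀ x ∈ Asn, x ∉ (Bgp s n : Set G) := by
        rintro x ⟨a, haA, rfl⟩ hmem
        have : s (n + 1) ∈ Bgp s n := by
          have := (Bgp s n).mul_mem ((Bgp s n).inv_mem (hAleBn haA)) hmem
          simpa [← mul_assoc] using this
        have hch := hchain (n + 1) (Finset.mem_Icc.mpr ⟨by omega, le_rfl⟩)
        simp only [Nat.add_sub_cancel] at hch
        exact hch this
      by_cases hBsub : (Bgp s n : Set G) ⊆ (A : Set G) ∪ ASet s n (A : Set G)
      · -- boundary contains all of B_n \ A plus A·s_{n+1}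
        have hBdiff : (Bgp s n : Set G) \ (A : Set G) ⊆ (ASet s (n + 1) (A : Set G)) \ (A : Set G) := by
          rintro x ⟨hxB, hxA⟩
          rcases hBsub hxB with h | h
          · exact absurd h hxA
          · obtain ⟨i, hiI, a, haA, rfl⟩ := h
            have h1 := Finset.mem_Icc.mp hiI
            exact ⟨⟨i, Finset.mem_Icc.mpr ⟨h1.1, by omega⟩, a, haA, rfl⟩, hxA⟩
        have hdisj2 : Disjoint ((Bgp s n : Set G) \ (A : Set G)) Asn := by
          refine Set.disjoint_left.mpr (fun x hx hx' => hAsnB x hx' hx.1)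
        have hcard2 : ((Bgp s n : Set G) \ (A : Set G)).ncard
            = (Bgp s n : Set G).ncard - (A : Set G).ncard := by
          exact Set.ncard_diff hAleBn (Set.toFinite _)
        have hsub2 : ((Bgp s n : Set G) \ (A : Set G)) ∪ Asn
            ⊆ (ASet s (n + 1) (A : Set G)) \ (A : Set G) :=
          Set.union_subset hBdiff hAsnsub
        have hu : (((Bgp s n : Set G) \ (A : Set G)) ∪ Asn).ncard
            = ((Bgp s n : Set G) \ (A : Set G)).ncard + Asn.ncard :=
          Set.ncard_union_eq hdisj2 (Set.toFinite _) (Set.toFinite _)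
        have hBn : 2 ^ n ≤ Nat.card (Bgp s n) := by
          have := chain_pow hchain (Bgp s n) (Finset.Icc 1 n)
            (fun x hx => Finset.mem_Icc.mpr ⟨(Finset.mem_Icc.mp hx).1,
              by have := (Finset.mem_Icc.mp hx).2; omega⟩)
            (fun t ht => mem_Bgp s (Finset.mem_Icc.mp ht).1 (Finset.mem_Icc.mp ht).2)
          simpa [Nat.card_Icc] using this
        have hksmall : n + 1 ≤ 2 ^ n := Nat.lt_two_pow_self (n := n)
        have hAcard : (A : Set G).ncard = Nat.card A := by
          rw [← Nat.card_coe_set_eq]; rfl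
        have hBcard : (Bgp s n : Set G).ncard = Nat.card (Bgp s n) := by
          rw [← Nat.card_coe_set_eq]; rfl
        have hAle : (A : Set G).ncard ≤ (Bgp s n : Set G).ncard :=
          Set.ncard_le_ncard hAleBn (Set.toFinite _)
        have := Set.ncard_le_ncard hsub2 (Set.toFinite _)
        omega
      · -- recurse
        have hchain' : ∀ i ∈ Finset.Icc 1 n, s i ∉ Bgp s (i - 1) := by
          intro i hi
          have h1 := Finset.mem_Icc.mp hi
          exact hchain i (Finset.mem_Icc.mpr ⟨h1.1, by omega⟩)
        have hgen' : ∀ x ∈ A, x ∈ Subgroup.closure {y : G | y ∈ A ∧ ∃ i ∈ Finset.Icc 1 n, y = s i} := by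
          intro x hx
          have hseteq : {y : G | y ∈ A ∧ ∃ i ∈ Finset.Icc 1 n, y = s i}
              = {y : G | y ∈ A ∧ ∃ i ∈ Finset.Icc 1 (n + 1), y = s i} := by
            ext y
            simp only [Set.mem_setOf_eq]
            constructor
            · rintro ⟨h1, i, hiI, rfl⟩
              have h2 := Finset.mem_Icc.mp hiI
              exact ⟨h1, i, Finset.mem_Icc.mpr ⟨h2.1, by omega⟩, rfl⟩
            · rintro ⟨h1, i, hiI, rfl⟩
              have h2 := Finset.mem_Icc.mp hiI
              have hin : i ≤ n := by
                rcases Nat.eq_or_lt_of_le h2.2 with h | h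
                · exact absurd (h ▸ h1) hks
                · omega
              exact ⟨h1, i, Finset.mem_Icc.mpr ⟨h2.1, hin⟩, rfl⟩
          rw [hseteq]
          exact hgenA x hx
        have hih := ih hchain' hgen' hBsub
        have hrecsub : (ASet s n (A : Set G)) \ (A : Set G)
            ⊆ (ASet s (n + 1) (A : Set G)) \ (A : Set G) := by
          rintro x ⟨⟨i, hiI, a, haA, rfl⟩, hxA⟩
          have h1 := Finset.mem_Icc.mp hiI
          exact ⟨⟨i, Finset.mem_Icc.mpr ⟨h1.1, by omega⟩, a, haA, rfl⟩, hxA⟩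
        have hrecB : (ASet s n (A : Set G)) \ (A : Set G) ⊆ (Bgp s n : Set G) := by
          rintro x ⟨⟨i, hiI, a, haA, rfl⟩, hxA⟩
          have h1 := Finset.mem_Icc.mp hiI
          exact (Bgp s n).mul_mem (hAleBn haA) (mem_Bgp s h1.1 h1.2)
        have hdisj3 : Disjoint ((ASet s n (A : Set G)) \ (A : Set G)) Asn := by
          refine Set.disjoint_left.mpr (fun x hx hx' => hAsnB x hx' (hrecB hx))
        have hu : (((ASet s n (A : Set G)) \ (A : Set G)) ∪ Asn).ncard
            = ((ASet s n (A : Set G)) \ (A : Set G)).ncard + Asn.ncard :=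
          Set.ncard_union_eq hdisj3 (Set.toFinite _) (Set.toFinite _)
        have hsub3 : ((ASet s n (A : Set G)) \ (A : Set G)) ∪ Asn
            ⊆ (ASet s (n + 1) (A : Set G)) \ (A : Set G) :=
          Set.union_subset hrecsub hAsnsub
        have hApos : 0 < Nat.card A := Nat.card_pos
        have := Set.ncard_le_ncard hsub3 (Set.toFinite _)
        omega

lemma cay_nout_image (S : Set G) (g : G) (A : Set G) :
    Nout (cayRel S) ((g * ·) '' A) = (g * ·) '' Nout (cayRel S) A := by
  ext x
  constructor
  · rintro ⟨hx, y, ⟨z, hz, rfl⟩, he⟩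
    refine ⟨g⁻¹ * x, ⟨?_, z, hz, ?_⟩, by simp⟩
    · intro hc
      exact hx ⟨g⁻¹ * x, hc, by simp⟩
    · have : (g * z)⁻¹ * x ∈ S := he
      simpa [cayRel, mul_assoc] using this
  · rintro ⟨z, ⟨hznA, w, hw, he⟩, rfl⟩
    refine ⟨?_, g * w, ⟨w, hw, rfl⟩, ?_⟩
    · rintro ⟨z', hz', heq⟩
      have : z' = z := mul_left_cancel heq
      exact hznA (this ▸ hz')
    · have : w⁻¹ * z ∈ S := he
      simpa [cayRel, mul_assoc] using this

lemma cay_bar_image (S : Set G) (g : G) (A : Set G) :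
    barP (cayRel S) ((g * ·) '' A) = (g * ·) '' barP (cayRel S) A := by
  have hbij : Function.Bijective (g * ·) := (Equiv.mulLeft g).bijective
  rw [barP, barP, cay_nout_image, ← Set.image_union, Set.image_compl_eq hbij]

lemma cay_frag_image {S : Set G} {A : Set G} (g : G) (hA : FragP (cayRel S) A) :
    FragP (cayRel S) ((g * ·) '' A) := by
  obtain ⟨⟨hne, hbar⟩, hcard⟩ := hA
  refine ⟨⟨hne.image _, ?_⟩, ?_⟩
  · have : (barP (cayRel S) ((g * ·) '' A)) = (g * ·) '' barP (cayRel S) A :=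
      cay_bar_image S g A
    rw [show ((g * ·) '' A ∪ Nout (cayRel S) ((g * ·) '' A))ᶜ
      = barP (cayRel S) ((g * ·) '' A) from rfl, this]
    exact hbar.image _
  · rw [cay_nout_image, Set.ncard_image_of_injective _ (mul_right_injective g), hcard]

lemma LBcore {k : ℕ} {s : ℕ → G}
    (hchain : ∀ i ∈ Finset.Icc 1 k, s i ∉ Bgp s (i - 1))
    (hgen : Bgp s k = ⊤) (A : Set G)
    (hA : FragP (cayRel (((Finset.Icc 1 k).image s : Finset G) : Set G)) A)
    (hmin : ∀ B : Set G,
      (FragP (cayRel (((Finset.Icc 1 k).image s : Finset G) : Set G)) B ∨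
        FragP (Function.swap (cayRel (((Finset.Icc 1 k).image s : Finset G) : Set G))) B) →
      A.ncard ≤ B.ncard) :
    k ≤ kappa (cayRel (((Finset.Icc 1 k).image s : Finset G) : Set G)) := by
  classical
  set S : Set G := (((Finset.Icc 1 k).image s : Finset G) : Set G) with hSdef
  set E : G → G → Prop := cayRel S with hEdef
  have hSmem : ∀ x : G, x ∈ S ↔ ∃ i ∈ Finset.Icc 1 k, s i = x := by
    intro x
    simp [hSdef]
  obtain ⟨a₀, ha₀⟩ := hA.1.1
  set A₁ : Set G := (a₀⁻¹ * ·) '' A with hA₁def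
  have hA₁ : FragP E A₁ := cay_frag_image a₀⁻¹ hA
  have hcard₁ : A₁.ncard = A.ncard := Set.ncard_image_of_injective _ (mul_right_injective _)
  have hmin₁ : ∀ B : Set G, (FragP E B ∨ FragP (Function.swap E) B) → A₁.ncard ≤ B.ncard := by
    intro B hB
    rw [hcard₁]
    exact hmin B hB
  have h1A : (1 : G) ∈ A₁ := ⟨a₀, ha₀, by simp⟩
  have hstab : ∀ a ∈ A₁, (a * ·) '' A₁ = A₁ := by
    intro a ha
    have hF : FragP E ((a * ·) '' A₁) := cay_frag_image a hA₁
    have himcard : ((a * ·) '' A₁).ncard = A₁.ncard :=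
      Set.ncard_image_of_injective _ (mul_right_injective _)
    rcases atom_lemma hA₁ hmin₁ hF with hsub | hdisj
    · exact (Set.eq_of_subset_of_ncard_le hsub (by omega) (Set.toFinite _)).symm
    · exfalso
      have : a ∈ A₁ ∩ ((a * ·) '' A₁) := ⟨ha, 1, h1A, mul_one a⟩
      rw [hdisj] at this
      exact this
  have hmul : ∀ x ∈ A₁, ∀ y ∈ A₁, x * y ∈ A₁ := by
    intro x hx y hy
    rw [← hstab x hx]
    exact ⟨y, hy, rfl⟩
  have hinv : ∀ x ∈ A₁, x⁻¹ ∈ A₁ := by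
    intro x hx
    have h1 : (1 : G) ∈ (x * ·) '' A₁ := (hstab x hx).symm ▸ h1A
    obtain ⟨z, hz, hxz⟩ := h1
    have : x⁻¹ = z := inv_eq_of_mul_eq_one_right hxz
    rw [this]
    exact hz
  set Asub : Subgroup G :=
    { carrier := A₁
      mul_mem' := fun {x y} hx hy => hmul x hx y hy
      one_mem' := h1A
      inv_mem' := fun {x} hx => hinv x hx } with hAsubdef
  have hAsub_coe : (Asub : Set G) = A₁ := rfl
  -- generation
  set genset : Set G := {y : G | y ∈ Asub ∧ ∃ i ∈ Finset.Icc 1 k, y = s i} with hgensetdef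
  have hgenA : ∀ x ∈ Asub, x ∈ Subgroup.closure genset := by
    set R : Set G := A₁ ∩ (Subgroup.closure genset : Set G) with hRdef
    have hRsubA : R ⊆ A₁ := Set.inter_subset_left
    have key : Nout E R ⊆ Nout E A₁ := by
      rintro y ⟨hyR, x, ⟨hxA, hxC⟩, he⟩
      by_cases hyA : y ∈ A₁
      · exfalso
        apply hyR
        refine ⟨hyA, ?_⟩
        have hxyS : x⁻¹ * y ∈ S := he
        have hxyA : x⁻¹ * y ∈ A₁ := hmul _ (hinv x hxA) _ hyA
        have hgs : x⁻¹ * y ∈ genset := by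
          refine ⟨hxyA, ?_⟩
          obtain ⟨i, hiI, hieq⟩ := (hSmem _).mp hxyS
          exact ⟨i, hiI, hieq.symm⟩
        have : y ∈ Subgroup.closure genset := by
          have := (Subgroup.closure genset).mul_mem hxC (Subgroup.subset_closure hgs)
          simpa [mul_assoc] using this
        exact this
      · exact ⟨hyA, x, hxA, he⟩
    have hRpart : IsPart E R := by
      refine ⟨⟨1, h1A, Subgroup.one_mem _⟩, ?_⟩
      obtain ⟨c, hc⟩ := hA₁.1.2
      refine ⟨c, fun hmem => hc ?_⟩
      rcases hmem with h | h
      · exact Or.inl (hRsubA h)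
      · exact Or.inr (key h)
    have hRfrag : FragP E R := by
      refine ⟨hRpart, le_antisymm ?_ (kappa_le_ncard_nout hRpart)⟩
      calc (Nout E R).ncard ≤ (Nout E A₁).ncard := Set.ncard_le_ncard key (Set.toFinite _)
        _ = kappa E := hA₁.2
    have hle : A₁.ncard ≤ R.ncard := hmin₁ R (Or.inl hRfrag)
    have : R = A₁ := Set.eq_of_subset_of_ncard_le hRsubA hle (Set.toFinite _)
    intro x hx
    have : x ∈ R := this.symm ▸ hx
    exact this.2
  -- identification of boundary
  have hNoutA₁ : Nout E A₁ = ASet s k A₁ \ A₁ := by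
    ext y
    constructor
    · rintro ⟨hy, x, hx, he⟩
      obtain ⟨i, hiI, hieq⟩ := (hSmem _).mp he
      refine ⟨⟨i, hiI, x, hx, ?_⟩, hy⟩
      rw [hieq]
      simp [mul_assoc]
    · rintro ⟨⟨i, hiI, a, haA, rfl⟩, hyA⟩
      refine ⟨hyA, a, haA, ?_⟩
      show a⁻¹ * (a * s i) ∈ S
      rw [← mul_assoc, inv_mul_cancel, one_mul]
      exact (hSmem _).mpr ⟨i, hiI, rfl⟩
  have hpart_alg : ¬ ((Bgp s k : Set G) ⊆ (Asub : Set G) ∪ ASet s k (Asub : Set G)) := by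
    rw [hgen, hAsub_coe]
    intro hsub
    obtain ⟨c, hc⟩ := hA₁.1.2
    apply hc
    rcases hsub (Set.mem_univ c) with h | h
    · exact Or.inl h
    · by_cases hcA : c ∈ A₁
      · exact Or.inl hcA
      · exact Or.inr (hNoutA₁.symm ▸ ⟨h, hcA⟩)
  have halg := alg_key k hchain Asub hgenA hpart_alg
  rw [hAsub_coe] at halg
  calc k ≤ (ASet s k A₁ \ A₁).ncard := halg
    _ = (Nout E A₁).ncard := by rw [hNoutA₁]
    _ = kappa E := hA₁.2

lemma chain_of_hier {k : ℕ} {s : ℕ → G}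
    (hne : ∀ i ∈ Finset.Icc 1 k, s i ≠ 1)
    (hhier : ∀ i ∈ Finset.Icc 1 k, ∀ j ∈ Finset.Icc 1 k, i ≠ j → Bgp s i ≠ Bgp s j) :
    ∀ i ∈ Finset.Icc 1 k, s i ∉ Bgp s (i - 1) := by
  intro i hi hmem
  have h1 := Finset.mem_Icc.mp hi
  rcases Nat.eq_or_lt_of_le h1.1 with h | h
  · -- i = 1 : Bgp s 0 = ⊥
    have hbot : Bgp s 0 = ⊥ := by
      rw [Bgp]
      simp
    rw [← h] at hmem
    rw [show (1 : ℕ) - 1 = 0 from rfl, hbot, Subgroup.mem_bot] at hmem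
    exact hne i hi (h ▸ hmem)
  · -- i ≥ 2
    have hi1 : i - 1 ∈ Finset.Icc 1 k := Finset.mem_Icc.mpr ⟨by omega, by omega⟩
    apply hhier i hi (i - 1) hi1 (by omega)
    apply le_antisymm
    · apply (Subgroup.closure_le _).mpr
      intro x hx
      simp only [Finset.coe_image, Set.mem_image, Finset.mem_coe, Finset.mem_Icc] at hx
      obtain ⟨t, ht, rfl⟩ := hx
      rcases Nat.eq_or_lt_of_le ht.2 with h2 | h2
      · rw [h2]
        exact hmem
      · exact mem_Bgp s ht.1 (by omega)
    · exact Bgp_mono s (by omega)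

lemma Bgp_inv (s : ℕ → G) (j : ℕ) : Bgp (fun i => (s i)⁻¹) j = Bgp s j := by
  rw [Bgp, Bgp]
  have hset : (((Finset.Icc 1 j).image (fun i => (s i)⁻¹) : Finset G) : Set G)
      = (((Finset.Icc 1 j).image s : Finset G) : Set G)⁻¹ := by
    ext x
    simp only [Finset.coe_image, Set.mem_image, Finset.mem_coe, Set.mem_inv]
    constructor
    · rintro ⟨t, ht, rfl⟩
      exact ⟨t, ht, by simp⟩
    · rintro ⟨t, ht, heq⟩
      exact ⟨t, ht, by rw [heq]; simp⟩
  rw [hset, Subgroup.closure_inv]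

lemma cayRel_inv_swap (s : ℕ → G) (k : ℕ) :
    cayRel (((Finset.Icc 1 k).image (fun i => (s i)⁻¹) : Finset G) : Set G)
      = Function.swap (cayRel (((Finset.Icc 1 k).image s : Finset G) : Set G)) := by
  funext x y
  apply propext
  show x⁻¹ * y ∈ _ ↔ y⁻¹ * x ∈ _
  simp only [Finset.coe_image, Set.mem_image, Finset.mem_coe]
  constructor
  · rintro ⟨t, ht, heq⟩
    exact ⟨t, ht, by rw [← inv_inv (s t), heq]; simp⟩
  · rintro ⟨t, ht, heq⟩
    exact ⟨t, ht, by rw [heq]; simp⟩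

lemma add_two_le_two_pow {k : ℕ} (h : 2 ≤ k) : k + 2 ≤ 2 ^ k := by
  induction k with
  | zero => omega
  | succ n ih =>
    rcases Nat.lt_or_ge n 2 with h2 | h2
    · interval_cases n <;> simp_all <;> omega
    · have := ih h2
      have h3 : 2 ^ (n + 1) = 2 * 2 ^ n := by ring
      omega

end Grp

end Aux

/-- A connected hierarchical Cayley digraph is optimally vertex connected:
`κ(Cay(G,S)) = |S|`. -/
theorem stmt_15 {G : Type*} [Group G] [Finite G] [DecidableEq G]
    (k : ℕ) (hk : 1 ≤ k) (s : ℕ → G)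
    (hne : ∀ i ∈ Finset.Icc 1 k, s i ≠ 1)
    (hhier : ∀ i ∈ Finset.Icc 1 k, ∀ j ∈ Finset.Icc 1 k, i ≠ j →
      Subgroup.closure (((Finset.Icc 1 i).image s : Finset G) : Set G) ≠
        Subgroup.closure (((Finset.Icc 1 j).image s : Finset G) : Set G))
    (hgen : Subgroup.closure (((Finset.Icc 1 k).image s : Finset G) : Set G) = ⊤) :
    kappa (cayRel (((Finset.Icc 1 k).image s : Finset G) : Set G)) =
      ((Finset.Icc 1 k).image s).card := by
  have hchain : ∀ i ∈ Finset.Icc 1 k, s i ∉ Aux.Bgp s (i - 1) :=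
    Aux.chain_of_hier hne hhier
  have hgenB : Aux.Bgp s k = ⊤ := hgen
  have hinjOn : Set.InjOn s (Finset.Icc 1 k) := by
    intro x hx y hy hxy
    by_contra hnexy
    rcases Nat.lt_or_ge x y with h | h
    · exact Aux.s_inj hchain hx hy h hxy
    · exact Aux.s_inj hchain hy hx (by omega) hxy.symm
  have hcard : ((Finset.Icc 1 k).image s).card = k := by
    rw [Finset.card_image_of_injOn hinjOn, Nat.card_Icc]
    omega
  have h2k : 2 ^ k ≤ Nat.card G := by
    have h := Aux.chain_pow hchain (Aux.Bgp s k) (Finset.Icc 1 k) (fun x hx => hx)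
      (fun t ht => Aux.mem_Bgp s (Finset.mem_Icc.mp ht).1 (Finset.mem_Icc.mp ht).2)
    rw [hgenB, Subgroup.card_top, Nat.card_Icc] at h
    simpa using h
  by_cases hfull : ∀ x : G, x ∉ (((Finset.Icc 1 k).image s : Finset G) : Set G) → x = 1
  · -- degenerate: G = S ∪ {1}
    have hGle : Nat.card G ≤ k + 1 := by
      have hsub : (Set.univ : Set G) ⊆ (((Finset.Icc 1 k).image s : Finset G) : Set G) ∪ {1} := by
        intro x _
        by_cases hx : x ∈ (((Finset.Icc 1 k).image s : Finset G) : Set G)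
        · exact Or.inl hx
        · exact Or.inr (hfull x hx)
      calc Nat.card G = (Set.univ : Set G).ncard := (Set.ncard_univ G).symm
        _ ≤ ((((Finset.Icc 1 k).image s : Finset G) : Set G) ∪ {1}).ncard :=
            Set.ncard_le_ncard hsub (Set.toFinite _)
        _ ≤ (((Finset.Icc 1 k).image s : Finset G) : Set G).ncard + ({1} : Set G).ncard :=
            Set.ncard_union_le _ _
        _ = k + 1 := by rw [Set.ncard_coe_finset, hcard, Set.ncard_singleton]
    have hk1 : k = 1 := by
      by_contra hc
      have h2 : 2 ≤ k := by omega
      have := Aux.add_two_le_two_pow h2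
      omega
    have hG2 : Nat.card G = 2 := by
      rw [hk1] at h2k hGle
      omega
    have hnocut : ¬ ∃ T : Set G,
        ¬ SCOn (cayRel (((Finset.Icc 1 k).image s : Finset G) : Set G)) Tᶜ := by
      rintro ⟨T, hT⟩
      apply hT
      intro a ha b hb
      by_cases hab : a = b
      · rw [hab]
      · refine Relation.ReflTransGen.single ⟨ha, hb, ?_⟩
        show a⁻¹ * b ∈ _
        by_contra hmem
        have := hfull _ hmem
        rw [inv_mul_eq_one] at this
        exact hab this
    rw [kappa, if_neg hnocut, hcard, hG2, hk1]
  · push_neg at hfull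
    obtain ⟨w, hwS, hw1⟩ := hfull
    have h1S : (1 : G) ∉ (((Finset.Icc 1 k).image s : Finset G) : Set G) := by
      intro hmem
      simp only [Finset.coe_image, Set.mem_image, Finset.mem_coe] at hmem
      obtain ⟨i, hi, heq⟩ := hmem
      exact hne i hi heq
    have hupper : kappa (cayRel (((Finset.Icc 1 k).image s : Finset G) : Set G)) ≤ k := by
      have hnsc : ¬ SCOn (cayRel (((Finset.Icc 1 k).image s : Finset G) : Set G))
          ((((Finset.Icc 1 k).image s : Finset G) : Set G))ᶜ := by
        intro hsc
        have h1c : (1 : G) ∈ ((((Finset.Icc 1 k).image s : Finset G) : Set G))ᶜ := h1S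
        have hwc : w ∈ ((((Finset.Icc 1 k).image s : Finset G) : Set G))ᶜ := hwS
        have hreach := hsc 1 h1c w hwc
        have hkey : ∀ z, Relation.ReflTransGen
            (fun x y => x ∈ ((((Finset.Icc 1 k).image s : Finset G) : Set G))ᶜ ∧
              y ∈ ((((Finset.Icc 1 k).image s : Finset G) : Set G))ᶜ ∧
              cayRel (((Finset.Icc 1 k).image s : Finset G) : Set G) x y) 1 z → z = 1 := by
          intro z hz
          induction hz with
          | refl => rfl
          | tail _ e ih =>
            exfalso
            rw [ih] at e
            have h2 : (1 : G)⁻¹ * _ ∈ (((Finset.Icc 1 k).image s : Finset G) : Set G) := e.2.2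
            rw [inv_one, one_mul] at h2
            exact e.2.1 h2
        exact hw1 (hkey w hreach)
      have hc : ∃ T : Set G,
          ¬ SCOn (cayRel (((Finset.Icc 1 k).image s : Finset G) : Set G)) Tᶜ := ⟨_, hnsc⟩
      rw [kappa, if_pos hc]
      apply Nat.sInf_le
      exact ⟨(((Finset.Icc 1 k).image s : Finset G) : Set G),
        by rw [Set.ncard_coe_finset, hcard], hnsc⟩
    have hlower : k ≤ kappa (cayRel (((Finset.Icc 1 k).image s : Finset G) : Set G)) := by
      by_cases hcut : ∃ T : Set G,
          ¬ SCOn (cayRel (((Finset.Icc 1 k).image s : Finset G) : Set G)) Tᶜ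
      · obtain ⟨A, hAfrag, hAmin⟩ :=
          Aux.exists_atomic (cayRel (((Finset.Icc 1 k).image s : Finset G) : Set G)) hcut
        rcases hAfrag with hpos | hneg
        · exact Aux.LBcore hchain hgenB A hpos hAmin
        · have hBeq : ∀ j, Aux.Bgp (fun i => (s i)⁻¹) j = Aux.Bgp s j := Aux.Bgp_inv s
          have hchain' : ∀ i ∈ Finset.Icc 1 k,
              (fun i => (s i)⁻¹) i ∉ Aux.Bgp (fun i => (s i)⁻¹) (i - 1) := by
            intro i hi hmem
            rw [hBeq] at hmem
            apply hchain i hi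
            simpa using (Aux.Bgp s (i - 1)).inv_mem hmem
          have hgen' : Aux.Bgp (fun i => (s i)⁻¹) k = ⊤ := by rw [hBeq]; exact hgenB
          have hEeq : cayRel (((Finset.Icc 1 k).image (fun i => (s i)⁻¹) : Finset G) : Set G)
              = Function.swap (cayRel (((Finset.Icc 1 k).image s : Finset G) : Set G)) :=
            Aux.cayRel_inv_swap s k
          have hpos' : Aux.FragP
              (cayRel (((Finset.Icc 1 k).image (fun i => (s i)⁻¹) : Finset G) : Set G)) A := by
            rw [hEeq]
            exact hneg
          have hmin' : ∀ B : Set G,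
              (Aux.FragP
                (cayRel (((Finset.Icc 1 k).image (fun i => (s i)⁻¹) : Finset G) : Set G)) B ∨
                Aux.FragP (Function.swap
                  (cayRel (((Finset.Icc 1 k).image (fun i => (s i)⁻¹) : Finset G) : Set G))) B) →
              A.ncard ≤ B.ncard := by
            intro B hB
            rw [hEeq] at hB
            apply hAmin
            rcases hB with h | h
            · exact Or.inr h
            · exact Or.inl h
          have hres := Aux.LBcore hchain' hgen' A hpos' hmin'
          rw [hEeq, Aux.kappa_swap] at hres
          exact hres
      · rw [kappa, if_neg hcut]
        have := Nat.lt_two_pow_self (n := k)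
        omega
    rw [hcard]
    omega
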